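/- Brouwer's fixed-point theorem for the disk implies the 2-dimensional Sperner lemma: if every continuous self-map of the standard 2-simplex has a fixed point, then every Sperner labelling of any triangulation of the 2-simplex admits a fully labelled small triangle. -/

import Mathlib

/-- A triangulation of the standard `n`-simplex `stdSimplex ℝ (Fin (n+1))`:
a finite family of geometric `n`-cells (given by their vertex sets), each affinely
independent with `n+1` vertices, covering the simplex and meeting face-to-face. -/
structure Triangulation (n : ℕ) where
  cells : Finset (Finset (Fin (n + 1) → ℝ))
  card_cells : ∀ s ∈ cells, s.card = n + 1
  indep : ∀ s ∈ cells,
    AffineIndependent ℝ (Subtype.val : {x // x ∈ s} → (Fin (n + 1) → ℝ))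
  covers : (⋃ s ∈ cells, convexHull ℝ (s : Set (Fin (n + 1) → ℝ)))
      = stdSimplex ℝ (Fin (n + 1))
  face_to_face : ∀ s ∈ cells, ∀ t ∈ cells,
    convexHull ℝ (s : Set (Fin (n + 1) → ℝ)) ∩ convexHull ℝ (t : Set (Fin (n + 1) → ℝ))
      = convexHull ℝ ((s ∩ t : Finset (Fin (n + 1) → ℝ)) : Set (Fin (n + 1) → ℝ))

/-- The vertex set of a triangulation. -/
noncomputable def Triangulation.verts {n : ℕ} (T : Triangulation n) : Finset (Fin (n + 1) → ℝ) :=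
  T.cells.sup id

/-- A Sperner labelling: every vertex of the triangulation receives a label whose
barycentric coordinate (with respect to the standard simplex) at that vertex is positive,
i.e. a vertex in the interior of the face spanned by `{v_i : i ∈ I}` gets a label in `I`. -/
def IsSpernerLabelling {n : ℕ} (T : Triangulation n)
    (L : (Fin (n + 1) → ℝ) → Fin (n + 1)) : Prop :=
  ∀ v ∈ T.verts, 0 < v (L v)

/-- A map into a compact space whose graph is closed is continuous. -/
lemma aux_continuous_of_closed_graph {X Y : Type*} [TopologicalSpace X] [TopologicalSpace Y]
    [CompactSpace Y] {f : X → Y} (h : IsClosed {p : X × Y | f p.1 = p.2}) : Continuous f := by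
  rw [continuous_iff_isClosed]
  intro t ht
  have himg : f ⁻¹' t = Prod.fst '' ({p : X × Y | f p.1 = p.2} ∩ Set.univ ×ˢ t) := by
    ext x
    constructor
    · intro hx
      exact ⟨(x, f x), ⟨rfl, Set.mem_univ _, hx⟩, rfl⟩
    · rintro ⟨⟨a, b⟩, ⟨hab, -, hb⟩, rfl⟩
      simp only [Set.mem_setOf_eq] at hab
      simpa [Set.mem_preimage, hab] using hb
  rw [himg]
  exact isClosedMap_fst_of_compactSpace _ (h.inter (isClosed_univ.prod ht))

/-- A map on `K` into a compact set `C` whose (restricted) graph is closed is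
continuous on `K`. -/
lemma aux_continuousOn_of_closed_graph {X Y : Type*} [TopologicalSpace X] [TopologicalSpace Y]
    {f : X → Y} {K : Set X} {C : Set Y} (hC : IsCompact C) (hmaps : Set.MapsTo f K C)
    (hG : IsClosed {p : X × Y | p.1 ∈ K ∧ f p.1 = p.2}) : ContinuousOn f K := by
  rw [continuousOn_iff_continuous_restrict]
  have : CompactSpace ↥C := isCompact_iff_compactSpace.mp hC
  set F : ↥K → ↥C := fun x => ⟨f x, hmaps x.2⟩ with hF
  have hFc : Continuous F := by
    apply aux_continuous_of_closed_graph
    have hset : {p : ↥K × ↥C | F p.1 = p.2}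
        = (fun p : ↥K × ↥C => ((p.1 : X), (p.2 : Y))) ⁻¹'
          {p : X × Y | p.1 ∈ K ∧ f p.1 = p.2} := by
      ext p
      simp [hF, Subtype.ext_iff, p.1.2]
    rw [hset]
    exact hG.preimage ((continuous_subtype_val.comp continuous_fst).prodMk
      (continuous_subtype_val.comp continuous_snd))
  exact continuous_subtype_val.comp hFc

/-- Uniqueness of barycentric weights on an affinely independent cell. -/
lemma aux_uniq {n : ℕ} {s : Finset (Fin (n + 1) → ℝ)}
    (hind : AffineIndependent ℝ (Subtype.val : {x // x ∈ s} → (Fin (n + 1) → ℝ)))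
    {w u : (Fin (n + 1) → ℝ) → ℝ}
    (hw1 : ∑ v ∈ s, w v = 1) (hu1 : ∑ v ∈ s, u v = 1)
    (h : ∑ v ∈ s, w v • v = ∑ v ∈ s, u v • v) : ∀ v ∈ s, w v = u v := by
  have hw1' : ∑ v : {x // x ∈ s}, w v.val = 1 := by
    rw [Finset.sum_coe_sort s w]; exact hw1
  have hu1' : ∑ v : {x // x ∈ s}, u v.val = 1 := by
    rw [Finset.sum_coe_sort s u]; exact hu1
  have hc : Finset.univ.affineCombination ℝ (Subtype.val : {x // x ∈ s} → _)
        (fun v => w v.val)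
      = Finset.univ.affineCombination ℝ (Subtype.val : {x // x ∈ s} → _)
        (fun v => u v.val) := by
    rw [affineCombination_eq_centerMass hw1', affineCombination_eq_centerMass hu1',
      Finset.centerMass_eq_of_sum_1 _ _ hw1', Finset.centerMass_eq_of_sum_1 _ _ hu1']
    calc ∑ v : {x // x ∈ s}, w v.val • v.val
        = ∑ v ∈ s, w v • v := Finset.sum_coe_sort s (fun v => w v • v)
      _ = ∑ v ∈ s, u v • v := h
      _ = ∑ v : {x // x ∈ s}, u v.val • v.val := (Finset.sum_coe_sort s (fun v => u v • v)).symm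
  have hind' := hind.indicator_eq_of_affineCombination_eq Finset.univ Finset.univ _ _
    (by simpa using hw1') (by simpa using hu1') hc
  intro v hv
  have := congrFun hind' ⟨v, hv⟩
  simpa using this

/-- The `i`-th vertex of the standard simplex. -/
def auxVertex {n : ℕ} (i : Fin (n + 1)) : Fin (n + 1) → ℝ := Pi.single i 1

lemma auxVertex_mem {n : ℕ} (i : Fin (n + 1)) : auxVertex i ∈ stdSimplex ℝ (Fin (n + 1)) :=
  single_mem_stdSimplex ℝ i

lemma auxVertex_apply {n : ℕ} (i j : Fin (n + 1)) :
    auxVertex i j = if i = j then (1 : ℝ) else 0 := by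
  classical
  rw [auxVertex, Pi.single_apply]
  simp [eq_comm]

/-- The piecewise-affine label map is well defined: two barycentric representations of the
same point (in possibly different cells) give the same image point. -/
lemma aux_welldef {n : ℕ} (T : Triangulation n) (L : (Fin (n + 1) → ℝ) → Fin (n + 1))
    {s t : Finset (Fin (n + 1) → ℝ)} (hs : s ∈ T.cells) (ht : t ∈ T.cells)
    {w u : (Fin (n + 1) → ℝ) → ℝ}
    (hw0 : ∀ v ∈ s, 0 ≤ w v) (hw1 : ∑ v ∈ s, w v = 1)
    (hu0 : ∀ v ∈ t, 0 ≤ u v) (hu1 : ∑ v ∈ t, u v = 1)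
    (h : ∑ v ∈ s, w v • v = ∑ v ∈ t, u v • v) :
    ∑ v ∈ s, w v • auxVertex (L v) = ∑ v ∈ t, u v • auxVertex (L v) := by
  classical
  have hxs : (∑ v ∈ s, w v • v) ∈ convexHull ℝ (s : Set (Fin (n + 1) → ℝ)) :=
    Finset.mem_convexHull'.2 ⟨w, hw0, hw1, rfl⟩
  have hxt : (∑ v ∈ s, w v • v) ∈ convexHull ℝ (t : Set (Fin (n + 1) → ℝ)) :=
    Finset.mem_convexHull'.2 ⟨u, hu0, hu1, h.symm⟩
  have hint : (∑ v ∈ s, w v • v)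
      ∈ convexHull ℝ ((s ∩ t : Finset (Fin (n + 1) → ℝ)) : Set (Fin (n + 1) → ℝ)) := by
    rw [← T.face_to_face s hs t ht]; exact ⟨hxs, hxt⟩
  obtain ⟨p, hp0, hp1, hpx⟩ := Finset.mem_convexHull'.1 hint
  set p' : (Fin (n + 1) → ℝ) → ℝ := fun v => if v ∈ s ∩ t then p v else 0 with hp'
  have hsums : ∀ g : (Fin (n + 1) → ℝ) → (Fin (n + 1) → ℝ),
      ∑ v ∈ s, p' v • g v = ∑ v ∈ s ∩ t, p v • g v := by
    intro g
    simp only [hp', ite_smul, zero_smul]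
    rw [Finset.sum_ite_mem, ← Finset.inter_assoc, Finset.inter_self]
  have hsumt : ∀ g : (Fin (n + 1) → ℝ) → (Fin (n + 1) → ℝ),
      ∑ v ∈ t, p' v • g v = ∑ v ∈ s ∩ t, p v • g v := by
    intro g
    simp only [hp', ite_smul, zero_smul]
    rw [Finset.sum_ite_mem]
    congr 1
    rw [Finset.inter_comm s t, ← Finset.inter_assoc, Finset.inter_self, Finset.inter_comm]
  have hps1 : ∑ v ∈ s, p' v = 1 := by
    simp only [hp']
    rw [Finset.sum_ite_mem, ← Finset.inter_assoc, Finset.inter_self]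
    exact hp1
  have hpt1 : ∑ v ∈ t, p' v = 1 := by
    simp only [hp']
    rw [Finset.sum_ite_mem]
    rw [show t ∩ (s ∩ t) = s ∩ t by
      rw [Finset.inter_comm s t, ← Finset.inter_assoc, Finset.inter_self, Finset.inter_comm]]
    exact hp1
  have hws : ∀ v ∈ s, w v = p' v := by
    refine aux_uniq (T.indep s hs) hw1 hps1 ?_
    have e1 : ∑ v ∈ s, p' v • v = ∑ v ∈ s ∩ t, p v • v := hsums (fun v => v)
    rw [e1, hpx]
  have hut : ∀ v ∈ t, u v = p' v := by
    refine aux_uniq (T.indep t ht) hu1 hpt1 ?_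
    have e2 : ∑ v ∈ t, p' v • v = ∑ v ∈ s ∩ t, p v • v := hsumt (fun v => v)
    rw [e2, hpx, h]
  calc ∑ v ∈ s, w v • auxVertex (L v)
      = ∑ v ∈ s, p' v • auxVertex (L v) :=
        Finset.sum_congr rfl fun v hv => by rw [hws v hv]
    _ = ∑ v ∈ s ∩ t, p v • auxVertex (L v) := hsums _
    _ = ∑ v ∈ t, p' v • auxVertex (L v) := (hsumt _).symm
    _ = ∑ v ∈ t, u v • auxVertex (L v) :=
        Finset.sum_congr rfl fun v hv => by rw [hut v hv]

/-- Brouwer's fixed-point theorem for the standard 2-simplex implies the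
two-dimensional Sperner lemma. -/
theorem brouwer_implies_sperner_two_dim
    (brouwer : ∀ f : (Fin 3 → ℝ) → (Fin 3 → ℝ),
      ContinuousOn f (stdSimplex ℝ (Fin 3)) →
      Set.MapsTo f (stdSimplex ℝ (Fin 3)) (stdSimplex ℝ (Fin 3)) →
        ∃ x ∈ stdSimplex ℝ (Fin 3), f x = x)
    (T : Triangulation 2) (L : (Fin 3 → ℝ) → Fin 3) (hL : IsSpernerLabelling T L) :
    ∃ s ∈ T.cells, s.image L = (Finset.univ : Finset (Fin 3)) := by
  classical
  set K := stdSimplex ℝ (Fin 3) with hK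
  have hhull_sub : ∀ s ∈ T.cells, convexHull ℝ (s : Set (Fin 3 → ℝ)) ⊆ K := by
    intro s hs
    rw [hK, ← T.covers]
    intro y hy
    exact Set.mem_biUnion hs hy
  have hmem : ∀ x ∈ K, ∃ s, s ∈ T.cells ∧ ∃ w : (Fin 3 → ℝ) → ℝ,
      (∀ v ∈ s, 0 ≤ w v) ∧ (∑ v ∈ s, w v = 1) ∧ (∑ v ∈ s, w v • v = x) := by
    intro x hx
    have hx' : x ∈ ⋃ s ∈ T.cells, convexHull ℝ (s : Set (Fin 3 → ℝ)) := by
      rw [T.covers]; exact hx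
    simp only [Set.mem_iUnion, exists_prop] at hx'
    obtain ⟨s, hs, hxs⟩ := hx'
    obtain ⟨w, h0, h1, hxw⟩ := Finset.mem_convexHull'.1 hxs
    exact ⟨s, hs, w, h0, h1, hxw⟩
  choose! cell hcell wt hwt0 hwt1 hwtx using hmem
  set f : (Fin 3 → ℝ) → (Fin 3 → ℝ) := fun x => ∑ v ∈ cell x, wt x v • auxVertex (L v) with hf
  have hfval : ∀ x ∈ K, ∀ s ∈ T.cells, ∀ u : (Fin 3 → ℝ) → ℝ,
      (∀ v ∈ s, 0 ≤ u v) → (∑ v ∈ s, u v = 1) → (∑ v ∈ s, u v • v = x) →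
      f x = ∑ v ∈ s, u v • auxVertex (L v) := by
    intro x hx s hs u h0 h1 hxu
    exact aux_welldef T L (hcell x hx) hs (hwt0 x hx) (hwt1 x hx) h0 h1 (by rw [hwtx x hx, hxu])
  have hmapsf : Set.MapsTo f K K := by
    intro x hx
    have h1 : f x ∈ convexHull ℝ K := by
      have hcm := Finset.centerMass_mem_convexHull (cell x) (hwt0 x hx)
        (by rw [hwt1 x hx]; norm_num) (fun v _ => auxVertex_mem (L v))
      rwa [Finset.centerMass_eq_of_sum_1 _ _ (hwt1 x hx)] at hcm
    rwa [(convex_stdSimplex ℝ (Fin 3)).convexHull_eq] at h1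
  have hGclosed : IsClosed {p : (Fin 3 → ℝ) × (Fin 3 → ℝ) | p.1 ∈ K ∧ f p.1 = p.2} := by
    have hGeq : {p : (Fin 3 → ℝ) × (Fin 3 → ℝ) | p.1 ∈ K ∧ f p.1 = p.2}
        = ⋃ s ∈ T.cells, (fun w : ({x // x ∈ s} → ℝ) =>
            ((∑ v, w v • (v : Fin 3 → ℝ)), ∑ v, w v • auxVertex (L v))) ''
              stdSimplex ℝ {x // x ∈ s} := by
      ext ⟨x, y⟩
      simp only [Set.mem_setOf_eq, Set.mem_iUnion, Set.mem_image, exists_prop]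
      constructor
      · rintro ⟨hx, hy⟩
        refine ⟨cell x, hcell x hx, fun v => wt x v.val,
          ⟨fun v => hwt0 x hx v.val v.2, by rw [Finset.sum_coe_sort]; exact hwt1 x hx⟩, ?_⟩
        have e1 : ∑ v : {z // z ∈ cell x}, wt x v.val • (v : Fin 3 → ℝ) = x := by
          rw [Finset.sum_coe_sort (cell x) (fun v => wt x v • v)]; exact hwtx x hx
        have e2 : ∑ v : {z // z ∈ cell x}, wt x v.val • auxVertex (L v.val) = y := by
          rw [Finset.sum_coe_sort (cell x) (fun v => wt x v • auxVertex (L v))]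
          rw [← hy, hf]
        rw [e1, e2]
      · rintro ⟨s, hs, w, hwmem, heq⟩
        set u : (Fin 3 → ℝ) → ℝ := fun v => if h : v ∈ s then w ⟨v, h⟩ else 0 with hu
        have hu0 : ∀ v ∈ s, 0 ≤ u v := by
          intro v hv
          rw [hu]; simp only [dif_pos hv]
          exact hwmem.1 ⟨v, hv⟩
        have huw : ∀ v : {z // z ∈ s}, u v.val = w v := by
          intro v; rw [hu]; simp only [dif_pos v.2]
        have husum : ∑ v ∈ s, u v = 1 := by
          rw [← Finset.sum_coe_sort s u]
          rw [Finset.sum_congr rfl fun v _ => huw v]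
          exact hwmem.2
        have hux : ∑ v ∈ s, u v • v = x := by
          rw [← Finset.sum_coe_sort s (fun v => u v • v)]
          rw [show ∑ v : {z // z ∈ s}, u v.val • (v : Fin 3 → ℝ)
              = ∑ v : {z // z ∈ s}, w v • (v : Fin 3 → ℝ) from
            Finset.sum_congr rfl fun v _ => by rw [huw v]]
          exact congrArg Prod.fst heq
        have huy : ∑ v ∈ s, u v • auxVertex (L v) = y := by
          rw [← Finset.sum_coe_sort s (fun v => u v • auxVertex (L v))]
          rw [show ∑ v : {z // z ∈ s}, u v.val • auxVertex (L v.val)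
              = ∑ v : {z // z ∈ s}, w v • auxVertex (L v.val) from
            Finset.sum_congr rfl fun v _ => by rw [huw v]]
          exact congrArg Prod.snd heq
        have hxK : x ∈ K := hhull_sub s hs (Finset.mem_convexHull'.2 ⟨u, hu0, husum, hux⟩)
        exact ⟨hxK, by rw [hfval x hxK s hs u hu0 husum hux, huy]⟩
    rw [hGeq]
    refine Set.Finite.isClosed_biUnion (T.cells.finite_toSet) fun s hs => ?_
    refine ((isCompact_stdSimplex _ _).image ?_).isClosed
    refine Continuous.prodMk ?_ ?_
    · exact continuous_finset_sum _ fun v _ => (continuous_apply v).smul continuous_const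
    · exact continuous_finset_sum _ fun v _ => (continuous_apply v).smul continuous_const
  have hcontf : ContinuousOn f K :=
    aux_continuousOn_of_closed_graph (isCompact_stdSimplex _ _) hmapsf hGclosed
  set g : (Fin 3 → ℝ) → (Fin 3 → ℝ) := fun x i => f x (i + 1) with hg
  have hcontg : ContinuousOn g K := by
    have hσ : Continuous (fun y : Fin 3 → ℝ => (fun i => y (i + 1))) :=
      continuous_pi fun i => continuous_apply _
    exact hσ.comp_continuousOn hcontf
  have hsum_shift : ∀ y : Fin 3 → ℝ, ∑ i, y (i + 1) = ∑ i, y i := by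
    intro y
    exact Fintype.sum_equiv (Equiv.addRight 1) (fun i => y (i + 1)) y (fun i => rfl)
  have hmapsg : Set.MapsTo g K K := by
    intro x hx
    obtain ⟨h0, h1⟩ := hmapsf hx
    refine ⟨fun i => h0 (i + 1), ?_⟩
    rw [show ∑ i, g x i = ∑ i, f x (i + 1) from rfl, hsum_shift (f x)]
    exact h1
  obtain ⟨x, hxK, hfix⟩ := brouwer g hcontg hmapsg
  have hfix' : ∀ i, f x (i + 1) = x i := fun i => congrFun hfix i
  have hs : cell x ∈ T.cells := hcell x hxK
  have hvK : ∀ v ∈ cell x, v ∈ K := fun v hv =>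
    hhull_sub _ hs (subset_convexHull ℝ _ (Finset.mem_coe.2 hv))
  have hvVert : ∀ v ∈ cell x, v ∈ T.verts := fun v hv =>
    Finset.mem_of_subset (Finset.le_sup (f := id) hs) hv
  have hcoord : ∀ j : Fin 3, f x j = ∑ v ∈ cell x, (if L v = j then wt x v else 0) := by
    intro j
    show (∑ v ∈ cell x, wt x v • auxVertex (L v)) j = _
    rw [Finset.sum_apply]
    refine Finset.sum_congr rfl fun v hv => ?_
    rw [Pi.smul_apply, auxVertex_apply, smul_eq_mul]
    by_cases hLv : L v = j <;> simp [hLv]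
  have key : ∀ j : Fin 3, (∃ v ∈ cell x, 0 < wt x v ∧ L v = j) →
      ∃ v ∈ cell x, 0 < wt x v ∧ L v = j + 1 := by
    rintro j ⟨v0, hv0, hw0pos, hL0⟩
    by_contra hcon
    push_neg at hcon
    have hsum0 : f x (j + 1) = 0 := by
      rw [hcoord (j + 1)]
      refine Finset.sum_eq_zero fun v hv => ?_
      by_cases hLv : L v = j + 1
      · rw [if_pos hLv]
        have hnn := hwt0 x hxK v hv
        by_contra hne
        exact hcon v hv (lt_of_le_of_ne hnn (Ne.symm hne)) hLv
      · rw [if_neg hLv]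
    have hxj : x j = 0 := by rw [← hfix' j]; exact hsum0
    have hexp : ∑ v ∈ cell x, wt x v * v j = 0 := by
      have hc := congrFun (hwtx x hxK) j
      rw [Finset.sum_apply] at hc
      simp only [Pi.smul_apply, smul_eq_mul] at hc
      rw [hc, hxj]
    have hnn : ∀ v ∈ cell x, 0 ≤ wt x v * v j := fun v hv =>
      mul_nonneg (hwt0 x hxK v hv) ((hvK v hv).1 j)
    have hv0j : wt x v0 * v0 j = 0 :=
      (Finset.sum_eq_zero_iff_of_nonneg hnn).1 hexp v0 hv0
    have hv0j' : v0 j = 0 := by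
      rcases mul_eq_zero.1 hv0j with h | h
      · exact absurd h (ne_of_gt hw0pos)
      · exact h
    have hsper := hL v0 (hvVert v0 hv0)
    rw [hL0] at hsper
    linarith
  have hbase : ∃ v ∈ cell x, 0 < wt x v := by
    by_contra hcon
    push_neg at hcon
    have hzero : ∑ v ∈ cell x, wt x v = 0 :=
      Finset.sum_eq_zero fun v hv => le_antisymm (hcon v hv) (hwt0 x hxK v hv)
    rw [hwt1 x hxK] at hzero
    norm_num at hzero
  obtain ⟨v0, hv0, hv0pos⟩ := hbase
  have h0 : ∃ v ∈ cell x, 0 < wt x v ∧ L v = L v0 := ⟨v0, hv0, hv0pos, rfl⟩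
  have h1 := key _ h0
  have h2 := key _ h1
  refine ⟨cell x, hs, Finset.eq_univ_of_forall fun b => ?_⟩
  have h3 : ∀ k : Fin 3, k = 0 ∨ k = 1 ∨ k = 2 := by decide
  have hbsplit : b = L v0 ∨ b = L v0 + 1 ∨ b = L v0 + 1 + 1 := by
    rcases h3 (b - L v0) with hk | hk | hk
    · left; rw [← sub_add_cancel b (L v0), hk, zero_add]
    · right; left; rw [← sub_add_cancel b (L v0), hk, add_comm]
    · right; right
      rw [← sub_add_cancel b (L v0), hk, add_comm]
      rw [show (2 : Fin 3) = 1 + 1 from rfl, ← add_assoc]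
  rcases hbsplit with hb | hb | hb
  · obtain ⟨v, hv, _, hLv⟩ := h0
    exact Finset.mem_image.2 ⟨v, hv, by rw [hLv, hb]⟩
  · obtain ⟨v, hv, _, hLv⟩ := h1
    exact Finset.mem_image.2 ⟨v, hv, by rw [hLv, hb]⟩
  · obtain ⟨v, hv, _, hLv⟩ := h2
    exact Finset.mem_image.2 ⟨v, hv, by rw [hLv, hb]⟩
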